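/- For integers r ≥ 3 and k ≥ 2r+2, with t = ⌊(k-1)/2⌋ and 3 ≤ r < t, we have C(k-t, r) + (k-2)·C(t, r-1) ≤ C(k-1, r). -/

import Mathlib

theorem stmt_0 (r k t : ℕ) (hr : 3 ≤ r) (hk : 2 * r + 2 ≤ k)
    (ht : t = (k - 1) / 2) (hrt : r < t) :
    (k - t).choose r + (k - 2) * t.choose (r - 1) ≤ (k - 1).choose r := by
  set m := k - 1 - t with hm
  have htm : t ≤ m := by omega
  have hmt : k - 1 = m + t := by omega
  have hkt : k - t = m + 1 := by omega
  have hk2 : k - 2 = m + t - 1 := by omega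
  -- Vandermonde
  have hv : (k - 1).choose r = ∑ ij ∈ Finset.HasAntidiagonal.antidiagonal r,
      m.choose ij.1 * t.choose ij.2 := by
    rw [hmt, Nat.add_choose_eq]
  have hsub : ({(r, 0), (r - 1, 1), (1, r - 1)} : Finset (ℕ × ℕ)) ⊆
      Finset.HasAntidiagonal.antidiagonal r := by
    intro x hx
    simp only [Finset.mem_insert, Finset.mem_singleton] at hx
    rcases hx with h | h | h <;> subst h <;>
      simp [Finset.mem_antidiagonal] <;> omega
  have hlow : ∑ ij ∈ ({(r, 0), (r - 1, 1), (1, r - 1)} : Finset (ℕ × ℕ)),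
      m.choose ij.1 * t.choose ij.2 ≤ (k - 1).choose r := by
    rw [hv]
    exact Finset.sum_le_sum_of_subset hsub
  have hcard : ∑ ij ∈ ({(r, 0), (r - 1, 1), (1, r - 1)} : Finset (ℕ × ℕ)),
      m.choose ij.1 * t.choose ij.2
      = m.choose r + m.choose (r - 1) * t + m * t.choose (r - 1) := by
    rw [Finset.sum_insert, Finset.sum_insert, Finset.sum_singleton]
    · simp [Nat.choose_one_right]; ring
    · simp only [Finset.mem_singleton, Prod.mk.injEq, not_and]
      omega
    · simp only [Finset.mem_insert, Finset.mem_singleton, Prod.mk.injEq, not_or, not_and]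
      omega
  have hpascal : (k - t).choose r = m.choose r + m.choose (r - 1) := by
    obtain ⟨s, rfl⟩ : ∃ s, r = s + 1 := ⟨r - 1, by omega⟩
    rw [hkt, Nat.choose_succ_succ']
    simp [Nat.add_comm]
  have hmono : t.choose (r - 1) ≤ m.choose (r - 1) := Nat.choose_le_choose _ htm
  have h1 : 1 ≤ t := by omega
  calc (k - t).choose r + (k - 2) * t.choose (r - 1)
      = m.choose r + m.choose (r - 1) + (m + t - 1) * t.choose (r - 1) := by
        rw [hpascal, hk2]
    _ ≤ m.choose r + m.choose (r - 1) * t + m * t.choose (r - 1) := by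
        have : (m + t - 1) * t.choose (r - 1)
            = m * t.choose (r - 1) + (t - 1) * t.choose (r - 1) := by
          rw [← Nat.add_mul]; congr 1; omega
        rw [this]
        have h2 : m.choose (r - 1) + (t - 1) * t.choose (r - 1)
            ≤ m.choose (r - 1) * t := by
          calc m.choose (r - 1) + (t - 1) * t.choose (r - 1)
              ≤ m.choose (r - 1) + (t - 1) * m.choose (r - 1) :=
                Nat.add_le_add_left (Nat.mul_le_mul_left _ hmono) _
            _ = (1 + (t - 1)) * m.choose (r - 1) := by
                rw [Nat.add_mul, Nat.one_mul]
            _ = m.choose (r - 1) * t := by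
                rw [Nat.mul_comm]; congr 1; omega
        omega
    _ ≤ (k - 1).choose r := by rw [← hcard]; exact hlow
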